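/- The series $F_C(a,b,c;x) = \sum_{m_1,\dots,m_n \ge 0} \frac{(a)_{m_1+\cdots+m_n} (b)_{m_1+\cdots+m_n}}{(c_1)_{m_1} \cdots (c_n)_{m_n}\, m_1! \cdots m_n!} x_1^{m_1} \cdots x_n^{m_n}$ converges absolutely for all $x \in \mathbb{C}^n$ with $\sum_{k=1}^n \sqrt{|x_k|} < 1$, where $c_1,\dots,c_n \notin \{0,-1,-2,\dots\}$. -/

import Mathlib

open scoped BigOperators

set_option maxHeartbeats 1000000

open Finset Nat

lemma poch_eval_prod (m : ℕ) (z : ℂ) :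
    (ascPochhammer ℂ m).eval z = ∏ j ∈ range m, (z + j) := by
  induction m with
  | zero => simp
  | succ m ih => rw [ascPochhammer_succ_eval, ih, prod_range_succ]

lemma prod_shift (c : ℝ) (M : ℕ) :
    c * ∏ j ∈ range M, (c + 1 + j) = (c + M) * ∏ j ∈ range M, (c + j) := by
  induction M with
  | zero => simp
  | succ M ih =>
    rw [prod_range_succ, prod_range_succ, ← mul_assoc, ih]
    push_cast
    ring

lemma prod_upper (A : ℕ) : ∀ M : ℕ, ∏ j ∈ range M, ((A : ℝ) + 1 + j) ≤ (M ! : ℝ) * (M + 1) ^ A := by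
  induction A with
  | zero =>
    intro M
    simp only [Nat.cast_zero, zero_add, pow_zero, mul_one]
    refine le_of_eq ?_
    calc ∏ j ∈ range M, (1 + (j : ℝ)) = ∏ j ∈ range M, ((j : ℝ) + 1) := by
          refine Finset.prod_congr rfl fun j _ => by ring
      _ = (M ! : ℝ) := by
          rw [← Finset.prod_range_add_one_eq_factorial]
          push_cast
          rfl
  | succ A ih =>
    intro M
    have hA1 : (0:ℝ) < (A:ℝ) + 1 := by positivity
    rw [← mul_le_mul_iff_right₀ hA1]
    have key : ((A:ℝ)+1) * ∏ j ∈ range M, (((A:ℕ).succ : ℝ) + 1 + j)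
        = (((A:ℝ)+1) + M) * ∏ j ∈ range M, (((A:ℝ)+1) + j) := by
      have := prod_shift ((A:ℝ)+1) M
      push_cast at this ⊢
      convert this using 3 <;> ring
    rw [key]
    have h2 : ∏ j ∈ range M, (((A:ℝ)+1) + j) ≤ (M ! : ℝ) * (M+1)^A := by
      have := ih M
      convert this using 2
    calc (((A:ℝ)+1) + M) * ∏ j ∈ range M, (((A:ℝ)+1) + j)
        ≤ (((A:ℝ)+1) + M) * ((M ! : ℝ) * (M+1)^A) := by
          apply mul_le_mul_of_nonneg_left h2 (by positivity)
      _ ≤ (((A:ℝ)+1) * (M+1)) * ((M ! : ℝ) * (M+1)^A) := by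
          apply mul_le_mul_of_nonneg_right _ (by positivity)
          nlinarith [Nat.cast_nonneg (α := ℝ) M, Nat.cast_nonneg (α := ℝ) A]
      _ = ((A:ℝ)+1) * ((M ! : ℝ) * (M+1)^(A+1)) := by ring


lemma fact_upper (L : ℕ) : ∀ k : ℕ, (k + L)! ≤ k ! * (k + L + 1) ^ L := by
  induction L with
  | zero => simp
  | succ L ih =>
    intro k
    calc (k + (L+1))! = (k + L + 1) * (k + L)! := by rw [← Nat.add_assoc]; exact rfl
      _ ≤ (k + L + 1) * (k ! * (k + L + 1) ^ L) := Nat.mul_le_mul_left _ (ih k)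
      _ = k ! * (k + L + 1) ^ (L+1) := by ring
      _ ≤ k ! * (k + (L+1) + 1) ^ (L+1) :=
          Nat.mul_le_mul_left _ (Nat.pow_le_pow_left (by omega) _)

lemma fact_div_bound (L m : ℕ) : m ! ≤ (m - L)! * (m + 1) ^ L := by
  rcases le_or_gt L m with h | h
  · have h2 := fact_upper L (m - L)
    rwa [Nat.sub_add_cancel h] at h2
  · rw [Nat.sub_eq_zero_of_le h.le, Nat.factorial_zero, one_mul]
    calc m ! ≤ m ^ m := Nat.factorial_le_pow m
      _ ≤ (m+1) ^ m := Nat.pow_le_pow_left (by omega) m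
      _ ≤ (m+1) ^ L := Nat.pow_le_pow_right (by omega) (by omega)

lemma poch_abs_upper (z : ℂ) (M : ℕ) :
    ‖(ascPochhammer ℂ M).eval z‖
      ≤ (M ! : ℝ) * (M + 1) ^ (⌈‖z‖⌉₊) := by
  rw [poch_eval_prod, norm_prod]
  calc ∏ j ∈ range M, ‖z + j‖
      ≤ ∏ j ∈ range M, ((⌈‖z‖⌉₊ : ℝ) + 1 + j) := by
        apply Finset.prod_le_prod (fun _ _ => norm_nonneg _)
        intro j _
        calc ‖z + j‖ ≤ ‖z‖ + ‖(j : ℂ)‖ :=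
              norm_add_le _ _
          _ ≤ (⌈‖z‖⌉₊ : ℝ) + 1 + j := by
              rw [Complex.norm_natCast]
              have := Nat.le_ceil (‖z‖)
              linarith
    _ ≤ (M ! : ℝ) * (M + 1) ^ (⌈‖z‖⌉₊) := prod_upper _ M

lemma poch_lower (c : ℂ) (hc : ∀ m : ℕ, c ≠ -(m : ℂ)) :
    ∃ (E : ℝ) (L : ℕ), 0 < E ∧ ∀ m : ℕ,
      (m ! : ℝ) ≤ E * (m + 1) ^ L * ‖(ascPochhammer ℂ m).eval c‖ := by
  obtain ⟨L, hcL⟩ : ∃ L : ℕ, ‖c‖ ≤ (L : ℝ) - 1 := by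
    refine ⟨⌈‖c‖⌉₊ + 1, ?_⟩
    have := Nat.le_ceil (‖c‖)
    push_cast
    linarith
  have hfac : ∀ j : ℕ, (0:ℝ) < ‖c + j‖ := by
    intro j
    have hne : c + (j : ℂ) ≠ 0 := by
      intro h
      exact hc j (by linear_combination h)
    exact norm_pos_iff.2 hne
  set ε : ℝ := ∏ j ∈ range L, min 1 (‖c + j‖) with hε
  have hmin_pos : ∀ j : ℕ, (0:ℝ) < min 1 (‖c + j‖) :=
    fun j => lt_min one_pos (hfac j)
  have hε0 : 0 < ε := Finset.prod_pos fun j _ => hmin_pos j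
  refine ⟨ε⁻¹, L, inv_pos.2 hε0, fun m => ?_⟩
  have key : ε * ((m - L)! : ℝ) ≤ ‖(ascPochhammer ℂ m).eval c‖ := by
    rw [poch_eval_prod, norm_prod]
    rcases le_or_gt m L with h | h
    · rw [Nat.sub_eq_zero_of_le h, Nat.factorial_zero, Nat.cast_one, mul_one]
      have hm' : m + (L - m) = L := by omega
      have hsplit : ε = (∏ j ∈ range m, min 1 (‖c + j‖)) *
          ∏ i ∈ range (L - m), min 1 (‖c + (m + i : ℕ)‖) := by
        have h4 := Finset.prod_range_add (fun j : ℕ => min 1 (‖c + (j:ℂ)‖)) m (L - m)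
        rw [hm'] at h4
        exact h4
      calc ε ≤ ∏ j ∈ range m, min 1 (‖c + j‖) := by
            rw [hsplit]
            have h1 : ∏ i ∈ range (L - m), min 1 (‖c + (m + i : ℕ)‖) ≤ 1 :=
              Finset.prod_le_one (fun _ _ => (hmin_pos _).le) (fun _ _ => min_le_left _ _)
            have h0 : (0:ℝ) ≤ ∏ j ∈ range m, min 1 (‖c + j‖) :=
              Finset.prod_nonneg fun j _ => (hmin_pos j).le
            nlinarith
        _ ≤ ∏ j ∈ range m, ‖c + j‖ :=
            Finset.prod_le_prod (fun j _ => (hmin_pos j).le) (fun j _ => min_le_right _ _)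
    · have hprod := Finset.prod_range_add (fun j : ℕ => ‖c + (j:ℂ)‖) L (m - L)
      have hm' : L + (m - L) = m := by omega
      rw [hm'] at hprod
      rw [hprod]
      have h1 : ε ≤ ∏ j ∈ range L, ‖c + j‖ :=
        Finset.prod_le_prod (fun j _ => (hmin_pos j).le) (fun j _ => min_le_right _ _)
      have h2 : ((m - L)! : ℝ) ≤ ∏ i ∈ range (m - L), ‖c + (L + i : ℕ)‖ := by
        calc ((m - L)! : ℝ) = ∏ i ∈ range (m - L), ((i : ℝ) + 1) := by
              rw [← Finset.prod_range_add_one_eq_factorial]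
              push_cast
              rfl
          _ ≤ ∏ i ∈ range (m - L), ‖c + (L + i : ℕ)‖ := by
              apply Finset.prod_le_prod (fun i _ => by positivity)
              intro i _
              have habs : ((L + i : ℕ) : ℝ) - ‖c‖
                  ≤ ‖c + ((L + i : ℕ) : ℂ)‖ := by
                have h3 := norm_add_le (c + ((L + i : ℕ) : ℂ)) (-c)
                simp only [add_neg_cancel_comm] at h3
                rw [Complex.norm_natCast] at h3
                rw [norm_neg] at h3
                linarith
              push_cast at habs ⊢
              linarith
      calc ε * ((m - L)! : ℝ)
          ≤ (∏ j ∈ range L, ‖c + j‖) *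
              ∏ i ∈ range (m - L), ‖c + (L + i : ℕ)‖ := by
            apply mul_le_mul h1 h2 (by positivity)
            exact Finset.prod_nonneg fun j _ => (norm_nonneg _)
        _ = _ := by
            congr 1
  -- combine: m! ≤ (m-L)! (m+1)^L ≤ ε⁻¹ (m+1)^L |poch|
  have hnat := fact_div_bound L m
  have hnat' : (m ! : ℝ) ≤ ((m - L)! : ℝ) * ((m:ℝ) + 1) ^ L := by
    have := Nat.cast_le (α := ℝ).2 hnat
    push_cast at this
    convert this using 2
  have hstep : ((m - L)! : ℝ) ≤ ε⁻¹ * ‖(ascPochhammer ℂ m).eval c‖ := by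
    rw [← mul_le_mul_iff_right₀ hε0, ← mul_assoc, mul_inv_cancel₀ hε0.ne', one_mul]
    exact key
  calc (m ! : ℝ) ≤ ((m - L)! : ℝ) * ((m:ℝ) + 1) ^ L := hnat'
    _ ≤ (ε⁻¹ * ‖(ascPochhammer ℂ m).eval c‖) * ((m:ℝ)+1) ^ L := by
        apply mul_le_mul_of_nonneg_right hstep (by positivity)
    _ = ε⁻¹ * ((m:ℝ) + 1) ^ L * ‖(ascPochhammer ℂ m).eval c‖ := by ring
/-- the Lauricella series `F_C(a,b,c;x)` converges absolutely whenever
`∑ √|x_k| < 1` and no `c_k` is a non-positive integer. -/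
theorem stmt13 (n : ℕ) (a b : ℂ) (c : Fin n → ℂ)
    (hc : ∀ k, ∀ m : ℕ, c k ≠ -(m : ℂ)) (x : Fin n → ℂ)
    (hx : (Finset.univ.sum fun k => Real.sqrt (‖x k‖)) < 1) :
    Summable (fun m : Fin n → ℕ =>
      ‖(ascPochhammer ℂ (Finset.univ.sum m)).eval a *
          (ascPochhammer ℂ (Finset.univ.sum m)).eval b /
          ((Finset.univ.prod fun k => (ascPochhammer ℂ (m k)).eval (c k)) *
            (Finset.univ.prod fun k => (Nat.factorial (m k) : ℂ))) *
        Finset.univ.prod fun k => x k ^ m k‖) := by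
  classical
  set t : Fin n → ℝ := fun k => Real.sqrt (‖x k‖) with ht
  have ht0 : ∀ k, 0 ≤ t k := fun k => Real.sqrt_nonneg _
  set ρ : ℝ := ∑ k, t k with hρdef
  have hρ0 : 0 ≤ ρ := Finset.sum_nonneg fun k _ => ht0 k
  have hρ1 : ρ < 1 := hx
  set r : ℝ := (ρ + 1) / 2 with hrdef
  have hρr : ρ ≤ r := by rw [hrdef]; linarith
  have hr0 : 0 < r := by rw [hrdef]; linarith
  have hr1 : r < 1 := by rw [hrdef]; linarith
  set Na : ℕ := ⌈‖a‖⌉₊ with hNa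
  set Nb : ℕ := ⌈‖b‖⌉₊ with hNb
  choose E L hE using fun k => poch_lower (c k) (hc k)
  set CE : ℝ := ∏ k, E k with hCEdef
  have hCE0 : 0 < CE := Finset.prod_pos fun k _ => (hE k).1
  set K : ℕ := Na + Nb + ∑ k, L k with hKdef
  set s : ℝ := r ^ 2 with hsdef
  have hs0 : 0 < s := by positivity
  have hs1 : s < 1 := by rw [hsdef]; nlinarith
  -- positivity of the Pochhammer denominators
  have hpoch_pos : ∀ (k : Fin n) (mk : ℕ),
      0 < ‖(ascPochhammer ℂ mk).eval (c k)‖ := by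
    intro k mk
    have hne : (ascPochhammer ℂ mk).eval (c k) ≠ 0 := by
      simp only [ne_eq, ascPochhammer_eval_eq_zero_iff]
      push_neg
      intro j _ heq
      exact hc k j (by linear_combination heq)
    exact norm_pos_iff.2 hne
  -- dominating geometric-type series
  have hsum : Summable (fun M : ℕ => CE * ((M : ℝ) + 1) ^ K * s ^ M) := by
    have h1 : Summable (fun M : ℕ => ((M : ℝ)) ^ K * s ^ M) :=
      summable_pow_mul_geometric_of_norm_lt_one K
        (by rw [Real.norm_eq_abs, abs_of_pos hs0]; exact hs1)
    have h2 := (summable_nat_add_iff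
      (f := fun M : ℕ => ((M : ℝ)) ^ K * s ^ M) 1).2 h1
    have h3 := h2.mul_left (CE / s)
    refine h3.congr fun M => ?_
    push_cast
    field_simp
    ring
  -- termwise bound
  have term_bound : ∀ m : Fin n → ℕ,
      ‖(ascPochhammer ℂ (Finset.univ.sum m)).eval a *
          (ascPochhammer ℂ (Finset.univ.sum m)).eval b /
          ((Finset.univ.prod fun k => (ascPochhammer ℂ (m k)).eval (c k)) *
            (Finset.univ.prod fun k => (Nat.factorial (m k) : ℂ))) *
        Finset.univ.prod fun k => x k ^ m k‖
      ≤ CE * (((Finset.univ.sum m : ℕ) : ℝ) + 1) ^ K * r ^ (Finset.univ.sum m) *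
          (Nat.multinomial Finset.univ m : ℝ) * ∏ k, t k ^ m k := by
    intro m
    set M : ℕ := Finset.univ.sum m with hM
    have hmk_le : ∀ k, m k ≤ M := fun k =>
      Finset.single_le_sum (fun i _ => Nat.zero_le _) (Finset.mem_univ k)
    have hden_pos : (0:ℝ) <
        (∏ k, ‖(ascPochhammer ℂ (m k)).eval (c k)‖) *
          ∏ k, ((m k)! : ℝ) := by
      apply mul_pos
      · exact Finset.prod_pos fun k _ => hpoch_pos k (m k)
      · exact Finset.prod_pos fun k _ => by positivity
    have hF : ‖(ascPochhammer ℂ M).eval a *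
          (ascPochhammer ℂ M).eval b /
          ((Finset.univ.prod fun k => (ascPochhammer ℂ (m k)).eval (c k)) *
            (Finset.univ.prod fun k => (Nat.factorial (m k) : ℂ))) *
        Finset.univ.prod fun k => x k ^ m k‖
        = (‖(ascPochhammer ℂ M).eval a‖ *
            ‖(ascPochhammer ℂ M).eval b‖ *
            ∏ k, ‖x k‖ ^ m k) /
          ((∏ k, ‖(ascPochhammer ℂ (m k)).eval (c k)‖) *
            ∏ k, ((m k)! : ℝ)) := by
      simp only [norm_mul, norm_div, norm_prod, norm_pow, Complex.norm_natCast]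
      ring
    rw [hF, div_le_iff₀ hden_pos]
    -- ingredients
    have ha' := poch_abs_upper a M
    have hb' := poch_abs_upper b M
    have hX : ∏ k, ‖x k‖ ^ m k = (∏ k, t k ^ m k) ^ 2 := by
      rw [← Finset.prod_pow]
      refine Finset.prod_congr rfl fun k _ => ?_
      rw [show ‖x k‖ = t k ^ 2 from (Real.sq_sqrt (norm_nonneg _)).symm,
        ← pow_mul, ← pow_mul, mul_comm 2 (m k)]
    have hmult : (M ! : ℝ) = (Nat.multinomial Finset.univ m : ℝ) * ∏ k, ((m k)! : ℝ) := by
      have h5 := congrArg (Nat.cast : ℕ → ℝ) (Nat.multinomial_spec Finset.univ m)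
      push_cast at h5
      rw [← h5]
      ring
    have hprod_fact : ∏ k, ((m k)! : ℝ)
        ≤ CE * ((M : ℝ) + 1) ^ (∑ k, L k) *
            ∏ k, ‖(ascPochhammer ℂ (m k)).eval (c k)‖ := by
      calc ∏ k, ((m k)! : ℝ)
          ≤ ∏ k, (E k * ((m k : ℝ) + 1) ^ L k *
              ‖(ascPochhammer ℂ (m k)).eval (c k)‖) :=
            Finset.prod_le_prod (fun k _ => by positivity) (fun k _ => (hE k).2 (m k))
        _ = CE * (∏ k, ((m k : ℝ) + 1) ^ L k) *
              ∏ k, ‖(ascPochhammer ℂ (m k)).eval (c k)‖ := by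
            rw [Finset.prod_mul_distrib, Finset.prod_mul_distrib]
        _ ≤ CE * ((M : ℝ) + 1) ^ (∑ k, L k) *
              ∏ k, ‖(ascPochhammer ℂ (m k)).eval (c k)‖ := by
            apply mul_le_mul_of_nonneg_right _
              (Finset.prod_nonneg fun k _ => norm_nonneg _)
            apply mul_le_mul_of_nonneg_left _ hCE0.le
            calc ∏ k, ((m k : ℝ) + 1) ^ L k
                ≤ ∏ k, ((M : ℝ) + 1) ^ L k := by
                  apply Finset.prod_le_prod (fun k _ => by positivity)
                  intro k _
                  apply pow_le_pow_left₀ (by positivity)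
                  have := hmk_le k
                  have : ((m k : ℝ)) ≤ (M : ℝ) := by exact_mod_cast this
                  linarith
              _ = ((M : ℝ) + 1) ^ (∑ k, L k) := Finset.prod_pow_eq_pow_sum _ _ _
    have hmulti : (Nat.multinomial Finset.univ m : ℝ) * ∏ k, t k ^ m k ≤ r ^ M := by
      have hmem : m ∈ Finset.piAntidiag Finset.univ M := by
        rw [Finset.mem_piAntidiag]
        exact ⟨hM.symm, fun i _ => Finset.mem_univ i⟩
      calc (Nat.multinomial Finset.univ m : ℝ) * ∏ k, t k ^ m k
          ≤ ∑ v ∈ Finset.piAntidiag Finset.univ M,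
              (Nat.multinomial Finset.univ v : ℝ) * ∏ k, t k ^ v k :=
            Finset.single_le_sum (f := fun v =>
              (Nat.multinomial Finset.univ v : ℝ) * ∏ k, t k ^ v k)
              (fun v _ => by positivity) hmem
        _ = ρ ^ M := (Finset.sum_pow_eq_sum_piAntidiag Finset.univ t M).symm
        _ ≤ r ^ M := pow_le_pow_left₀ hρ0 hρr M
    have hmulti0 : (0:ℝ) ≤ (Nat.multinomial Finset.univ m : ℝ) * ∏ k, t k ^ m k := by
      positivity
    -- use abbreviations
    set PA := ‖(ascPochhammer ℂ M).eval a‖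
    set PB := ‖(ascPochhammer ℂ M).eval b‖
    set PC := ∏ k, ‖(ascPochhammer ℂ (m k)).eval (c k)‖
    set PF := ∏ k, ((m k)! : ℝ)
    set T := ∏ k, t k ^ m k
    set mu := (Nat.multinomial Finset.univ m : ℝ)
    have hPA0 : 0 ≤ PA := norm_nonneg _
    have hPB0 : 0 ≤ PB := norm_nonneg _
    have hPC0 : 0 ≤ PC := Finset.prod_nonneg fun k _ => norm_nonneg _
    have hPF0 : 0 ≤ PF := Finset.prod_nonneg fun k _ => by positivity
    have hT0 : 0 ≤ T := Finset.prod_nonneg fun k _ => by positivity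
    have hmu0 : 0 ≤ mu := Nat.cast_nonneg _
    rw [hX]
    have hM1 : (0:ℝ) ≤ (M:ℝ) + 1 := by linarith [Nat.cast_nonneg (α := ℝ) M]
    calc PA * PB * T ^ 2
        ≤ ((M ! : ℝ) * ((M:ℝ) + 1) ^ Na) * ((M ! : ℝ) * ((M:ℝ) + 1) ^ Nb) * T ^ 2 := by
          refine mul_le_mul_of_nonneg_right (mul_le_mul ha' hb' hPB0 ?_) (sq_nonneg T)
          exact mul_nonneg (Nat.cast_nonneg _) (pow_nonneg hM1 _)
      _ = ((M:ℝ) + 1) ^ (Na + Nb) * ((mu * T) * (mu * T)) * (PF * PF) := by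
          rw [hmult, pow_add]; ring
      _ ≤ ((M:ℝ) + 1) ^ (Na + Nb) * (r ^ M * (mu * T)) * (PF * PF) := by
          refine mul_le_mul_of_nonneg_right (mul_le_mul_of_nonneg_left
            (mul_le_mul_of_nonneg_right hmulti hmulti0) (pow_nonneg hM1 _))
            (mul_nonneg hPF0 hPF0)
      _ ≤ ((M:ℝ) + 1) ^ (Na + Nb) * (r ^ M * (mu * T)) *
            ((CE * ((M : ℝ) + 1) ^ (∑ k, L k) * PC) * PF) := by
          refine mul_le_mul_of_nonneg_left (mul_le_mul_of_nonneg_right hprod_fact hPF0)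
            (mul_nonneg (pow_nonneg hM1 _)
              (mul_nonneg (pow_nonneg hr0.le _) (mul_nonneg hmu0 hT0)))
      _ = CE * (((M : ℕ) : ℝ) + 1) ^ K * r ^ M * mu * T * (PC * PF) := by
          rw [hKdef, pow_add, pow_add]; ring
  -- assemble summability
  apply summable_of_sum_le (c := ∑' M : ℕ, CE * ((M : ℝ) + 1) ^ K * s ^ M)
    (fun m => norm_nonneg _)
  intro u
  set N : ℕ := u.sup (fun m => Finset.univ.sum m) with hN
  have hsub : u ⊆ (Finset.range (N + 1)).biUnion
      (fun M => Finset.piAntidiag Finset.univ M) := by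
    intro m hm
    rw [Finset.mem_biUnion]
    refine ⟨Finset.univ.sum m, Finset.mem_range.2 (Nat.lt_succ_of_le (Finset.le_sup hm)), ?_⟩
    rw [Finset.mem_piAntidiag]
    exact ⟨rfl, fun i _ => Finset.mem_univ i⟩
  have hdisj : Set.PairwiseDisjoint (↑(Finset.range (N + 1)) : Set ℕ)
      (fun M => Finset.piAntidiag (Finset.univ : Finset (Fin n)) M) := by
    intro M1 _ M2 _ hne
    rw [Function.onFun, Finset.disjoint_left]
    intro m h1 h2
    rw [Finset.mem_piAntidiag] at h1 h2
    exact hne (h1.1 ▸ h2.1)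
  have slice_bound : ∀ M : ℕ,
      ∑ m ∈ Finset.piAntidiag (Finset.univ : Finset (Fin n)) M,
        ‖(ascPochhammer ℂ (Finset.univ.sum m)).eval a *
          (ascPochhammer ℂ (Finset.univ.sum m)).eval b /
          ((Finset.univ.prod fun k => (ascPochhammer ℂ (m k)).eval (c k)) *
            (Finset.univ.prod fun k => (Nat.factorial (m k) : ℂ))) *
          Finset.univ.prod fun k => x k ^ m k‖
        ≤ CE * ((M : ℝ) + 1) ^ K * s ^ M := by
    intro M
    calc ∑ m ∈ Finset.piAntidiag (Finset.univ : Finset (Fin n)) M,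
          ‖(ascPochhammer ℂ (Finset.univ.sum m)).eval a *
            (ascPochhammer ℂ (Finset.univ.sum m)).eval b /
            ((Finset.univ.prod fun k => (ascPochhammer ℂ (m k)).eval (c k)) *
              (Finset.univ.prod fun k => (Nat.factorial (m k) : ℂ))) *
            Finset.univ.prod fun k => x k ^ m k‖
        ≤ ∑ m ∈ Finset.piAntidiag (Finset.univ : Finset (Fin n)) M,
            CE * ((M : ℝ) + 1) ^ K * r ^ M *
              ((Nat.multinomial Finset.univ m : ℝ) * ∏ k, t k ^ m k) := by
          apply Finset.sum_le_sum
          intro m hm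
          have hMm : Finset.univ.sum m = M := ((Finset.mem_piAntidiag).1 hm).1
          rw [← hMm]
          calc _ ≤ _ := term_bound m
            _ = CE * (((Finset.univ.sum m : ℕ) : ℝ) + 1) ^ K * r ^ (Finset.univ.sum m) *
              ((Nat.multinomial Finset.univ m : ℝ) * ∏ k, t k ^ m k) := by ring
      _ = CE * ((M : ℝ) + 1) ^ K * r ^ M *
            ∑ m ∈ Finset.piAntidiag (Finset.univ : Finset (Fin n)) M,
              (Nat.multinomial Finset.univ m : ℝ) * ∏ k, t k ^ m k := by
          rw [Finset.mul_sum]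
      _ = CE * ((M : ℝ) + 1) ^ K * r ^ M * ρ ^ M := by
          rw [← Finset.sum_pow_eq_sum_piAntidiag Finset.univ t M]
      _ ≤ CE * ((M : ℝ) + 1) ^ K * r ^ M * r ^ M := by
          apply mul_le_mul_of_nonneg_left (pow_le_pow_left₀ hρ0 hρr M) (by positivity)
      _ = CE * ((M : ℝ) + 1) ^ K * s ^ M := by
          rw [hsdef, ← pow_mul, two_mul, pow_add]; ring
  calc ∑ m ∈ u, ‖(ascPochhammer ℂ (Finset.univ.sum m)).eval a *
          (ascPochhammer ℂ (Finset.univ.sum m)).eval b /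
          ((Finset.univ.prod fun k => (ascPochhammer ℂ (m k)).eval (c k)) *
            (Finset.univ.prod fun k => (Nat.factorial (m k) : ℂ))) *
          Finset.univ.prod fun k => x k ^ m k‖
      ≤ ∑ m ∈ (Finset.range (N + 1)).biUnion
            (fun M => Finset.piAntidiag Finset.univ M),
          ‖(ascPochhammer ℂ (Finset.univ.sum m)).eval a *
            (ascPochhammer ℂ (Finset.univ.sum m)).eval b /
            ((Finset.univ.prod fun k => (ascPochhammer ℂ (m k)).eval (c k)) *
              (Finset.univ.prod fun k => (Nat.factorial (m k) : ℂ))) *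
            Finset.univ.prod fun k => x k ^ m k‖ :=
        Finset.sum_le_sum_of_subset_of_nonneg hsub (fun m _ _ => norm_nonneg _)
    _ = ∑ M ∈ Finset.range (N + 1), ∑ m ∈ Finset.piAntidiag Finset.univ M,
          ‖(ascPochhammer ℂ (Finset.univ.sum m)).eval a *
            (ascPochhammer ℂ (Finset.univ.sum m)).eval b /
            ((Finset.univ.prod fun k => (ascPochhammer ℂ (m k)).eval (c k)) *
              (Finset.univ.prod fun k => (Nat.factorial (m k) : ℂ))) *
            Finset.univ.prod fun k => x k ^ m k‖ :=
        Finset.sum_biUnion hdisj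
    _ ≤ ∑ M ∈ Finset.range (N + 1), CE * ((M : ℝ) + 1) ^ K * s ^ M :=
        Finset.sum_le_sum fun M _ => slice_bound M
    _ ≤ ∑' M : ℕ, CE * ((M : ℝ) + 1) ^ K * s ^ M :=
        Summable.sum_le_tsum _ (fun M _ => by positivity) hsum
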